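/- For every α with 0 < α < 1, the inequality 10^α − 5^α + 2·13^α + 2·8^α − 3·20^α − 17^α < 0 holds. -/

import Mathlib

open Real

noncomputable def gAux (x : ℝ) : ℝ :=
  1 - (1/2 : ℝ) ^ x + 2 * (13/10 : ℝ) ^ x + 2 * (4/5 : ℝ) ^ x - 3 * (2 : ℝ) ^ x
    - (17/10 : ℝ) ^ x

lemma gAux_hasDerivAt (x : ℝ) :
    HasDerivAt gAux
      (-((1/2 : ℝ) ^ x * Real.log (1/2)) + 2 * ((13/10 : ℝ) ^ x * Real.log (13/10))
        + 2 * ((4/5 : ℝ) ^ x * Real.log (4/5)) - 3 * ((2 : ℝ) ^ x * Real.log 2)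
        - (17/10 : ℝ) ^ x * Real.log (17/10)) x := by
  have h1 := (hasStrictDerivAt_const_rpow (by norm_num : (0:ℝ) < 1/2) x).hasDerivAt
  have h2 := (hasStrictDerivAt_const_rpow (by norm_num : (0:ℝ) < 13/10) x).hasDerivAt
  have h3 := (hasStrictDerivAt_const_rpow (by norm_num : (0:ℝ) < 4/5) x).hasDerivAt
  have h4 := (hasStrictDerivAt_const_rpow (by norm_num : (0:ℝ) < 2) x).hasDerivAt
  have h5 := (hasStrictDerivAt_const_rpow (by norm_num : (0:ℝ) < 17/10) x).hasDerivAt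
  have H := (((((hasDerivAt_const x (1:ℝ)).sub h1).add (h2.const_mul 2)).add
    (h3.const_mul 2)).sub (h4.const_mul 3)).sub h5
  refine H.congr_deriv ?_
  ring

lemma gAux_deriv_neg {x : ℝ} (hx0 : 0 < x) (hx1 : x < 1) :
    (-((1/2 : ℝ) ^ x * Real.log (1/2)) + 2 * ((13/10 : ℝ) ^ x * Real.log (13/10))
        + 2 * ((4/5 : ℝ) ^ x * Real.log (4/5)) - 3 * ((2 : ℝ) ^ x * Real.log 2)
        - (17/10 : ℝ) ^ x * Real.log (17/10)) < 0 := by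
  have hlog2 : (0.6931471803 : ℝ) < Real.log 2 := Real.log_two_gt_d9
  -- term 1 : -( (1/2)^x * log (1/2) ) = (1/2)^x * log 2 ≤ log 2
  have t1 : -((1/2 : ℝ) ^ x * Real.log (1/2)) ≤ Real.log 2 := by
    have h : Real.log (1/2) = -Real.log 2 := by
      rw [one_div, Real.log_inv]
    rw [h]
    have hle : (1/2 : ℝ) ^ x ≤ 1 :=
      Real.rpow_le_one (by norm_num) (by norm_num) hx0.le
    nlinarith [Real.log_pos (by norm_num : (1:ℝ) < 2)]
  -- term 2 : 2 * (13/10)^x * log (13/10) ≤ 2 * (13/10) * (3/10)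
  have t2 : 2 * ((13/10 : ℝ) ^ x * Real.log (13/10)) ≤ 39/50 := by
    have hlogpos : 0 < Real.log (13/10) :=
      Real.log_pos (by norm_num)
    have hloge : Real.log (13/10) ≤ 3/10 := by
      have := Real.log_le_sub_one_of_pos (by norm_num : (0:ℝ) < 13/10)
      linarith
    have hle : (13/10 : ℝ) ^ x ≤ 13/10 := by
      calc (13/10 : ℝ) ^ x ≤ (13/10 : ℝ) ^ (1:ℝ) :=
            Real.rpow_le_rpow_of_exponent_le (by norm_num) hx1.le
        _ = 13/10 := Real.rpow_one _
    nlinarith [Real.rpow_pos_of_pos (by norm_num : (0:ℝ) < 13/10) x]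
  -- term 3 : 2 * (4/5)^x * log (4/5) ≤ 0
  have t3 : 2 * ((4/5 : ℝ) ^ x * Real.log (4/5)) ≤ 0 := by
    have hlogneg : Real.log (4/5) < 0 :=
      Real.log_neg (by norm_num) (by norm_num)
    have hpos : (0:ℝ) < (4/5 : ℝ) ^ x := Real.rpow_pos_of_pos (by norm_num) x
    nlinarith
  -- term 4 : -3 * (2^x * log 2) ≤ -3 * log 2
  have t4 : -(3 * ((2 : ℝ) ^ x * Real.log 2)) ≤ -(3 * Real.log 2) := by
    have hge : (1:ℝ) ≤ (2 : ℝ) ^ x :=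
      Real.one_le_rpow (by norm_num) hx0.le
    nlinarith [Real.log_pos (by norm_num : (1:ℝ) < 2)]
  -- term 5 : -( (17/10)^x * log (17/10) ) ≤ 0
  have t5 : -((17/10 : ℝ) ^ x * Real.log (17/10)) ≤ 0 := by
    have hlogpos : 0 < Real.log (17/10) := Real.log_pos (by norm_num)
    have hpos : (0:ℝ) < (17/10 : ℝ) ^ x := Real.rpow_pos_of_pos (by norm_num) x
    nlinarith
  linarith

lemma gAux_neg {α : ℝ} (hα0 : 0 < α) (hα1 : α < 1) : gAux α < 0 := by
  have hanti : StrictAntiOn gAux (Set.Icc 0 1) := by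
    apply strictAntiOn_of_deriv_neg (convex_Icc 0 1)
    · intro x _
      exact (gAux_hasDerivAt x).continuousAt.continuousWithinAt
    · intro x hx
      rw [interior_Icc] at hx
      rw [(gAux_hasDerivAt x).deriv]
      exact gAux_deriv_neg hx.1 hx.2
  have h0 : gAux 0 = 0 := by
    norm_num [gAux]
  have := hanti (Set.mem_Icc.mpr ⟨le_refl 0, zero_le_one⟩)
    (Set.mem_Icc.mpr ⟨hα0.le, hα1.le⟩) hα0
  linarith
theorem stmt_5 (α : ℝ) (hα0 : 0 < α) (hα1 : α < 1) :
    (10 : ℝ) ^ α - 5 ^ α + 2 * 13 ^ α + 2 * 8 ^ α - 3 * 20 ^ α - 17 ^ α < 0 := by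
  have h10 : (0:ℝ) < (10:ℝ) ^ α := Real.rpow_pos_of_pos (by norm_num) α
  have hg := gAux_neg hα0 hα1
  have key : (10 : ℝ) ^ α - 5 ^ α + 2 * 13 ^ α + 2 * 8 ^ α - 3 * 20 ^ α - 17 ^ α
      = (10:ℝ) ^ α * gAux α := by
    have e1 : (5:ℝ) ^ α = (10:ℝ) ^ α * (1/2:ℝ) ^ α := by
      rw [← Real.mul_rpow (by norm_num) (by norm_num)]; norm_num
    have e2 : (13:ℝ) ^ α = (10:ℝ) ^ α * (13/10:ℝ) ^ α := by
      rw [← Real.mul_rpow (by norm_num) (by norm_num)]; norm_num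
    have e3 : (8:ℝ) ^ α = (10:ℝ) ^ α * (4/5:ℝ) ^ α := by
      rw [← Real.mul_rpow (by norm_num) (by norm_num)]; norm_num
    have e4 : (20:ℝ) ^ α = (10:ℝ) ^ α * (2:ℝ) ^ α := by
      rw [← Real.mul_rpow (by norm_num) (by norm_num)]; norm_num
    have e5 : (17:ℝ) ^ α = (10:ℝ) ^ α * (17/10:ℝ) ^ α := by
      rw [← Real.mul_rpow (by norm_num) (by norm_num)]; norm_num
    rw [e1, e2, e3, e4, e5, gAux]
    ring
  rw [key]
  exact mul_neg_of_pos_of_neg h10 hg
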